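/- For any two k-dimensional linear subspaces S, T of R^{n+1}, identified with their orthogonal projection operators, the Hilbert-Schmidt inner product satisfies 0 ≤ k - S·T = S^⊥·T ≤ k‖S-T‖², where S^⊥ = I - S, ‖·‖ is the operator norm, and S·T = trace(Sᵗ∘T). -/

import Mathlib

open scoped RealInnerProductSpace

/-- Hilbert–Schmidt trace pairing helper: the trace of a continuous linear map. -/
noncomputable def clmTrace {n : ℕ} (A : EuclideanSpace ℝ (Fin (n+1)) →L[ℝ] EuclideanSpace ℝ (Fin (n+1))) : ℝ :=
  LinearMap.trace ℝ (EuclideanSpace ℝ (Fin (n+1))) (A : EuclideanSpace ℝ (Fin (n+1)) →ₗ[ℝ] EuclideanSpace ℝ (Fin (n+1)))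

lemma clmTrace_eq_sum {n : ℕ} (A : EuclideanSpace ℝ (Fin (n+1)) →L[ℝ] EuclideanSpace ℝ (Fin (n+1))) :
    clmTrace A = ∑ i, ⟪A (EuclideanSpace.single i 1), EuclideanSpace.single i 1⟫ := by
  rw [clmTrace, LinearMap.trace_eq_matrix_trace ℝ (EuclideanSpace.basisFun (Fin (n+1)) ℝ).toBasis]
  simp [Matrix.trace, LinearMap.toMatrix_apply, EuclideanSpace.inner_single_right, Matrix.diag]

lemma clmTrace_sub {n : ℕ} (A B : EuclideanSpace ℝ (Fin (n+1)) →L[ℝ] EuclideanSpace ℝ (Fin (n+1))) :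
    clmTrace (A - B) = clmTrace A - clmTrace B := by
  unfold clmTrace; rw [ContinuousLinearMap.coe_sub, map_sub]

lemma clmTrace_mul_comm {n : ℕ} (A B : EuclideanSpace ℝ (Fin (n+1)) →L[ℝ] EuclideanSpace ℝ (Fin (n+1))) :
    clmTrace (A * B) = clmTrace (B * A) := by
  unfold clmTrace
  rw [ContinuousLinearMap.mul_def, ContinuousLinearMap.mul_def,
    ContinuousLinearMap.toLinearMap_comp, ContinuousLinearMap.toLinearMap_comp,
    ← Module.End.mul_eq_comp, ← Module.End.mul_eq_comp, LinearMap.trace_mul_comm]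

/-- For orthogonal projections `S, T` onto `k`-dimensional subspaces of `ℝ^{n+1}`,
`0 ≤ k - S·T = S^⊥·T ≤ k ‖S-T‖²`, where `·` is the Hilbert–Schmidt inner product
(for symmetric maps, `S·T = trace (S ∘ T)`) and `‖·‖` the operator norm. -/
theorem stmt0 (n k : ℕ) (hk : 1 ≤ k) (hkn : k ≤ n + 1)
    (S T : EuclideanSpace ℝ (Fin (n+1)) →L[ℝ] EuclideanSpace ℝ (Fin (n+1)))
    (hSidem : S.comp S = S) (hSsym : ∀ v w, ⟪S v, w⟫ = ⟪v, S w⟫)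
    (hSrank : clmTrace S = k)
    (hTidem : T.comp T = T) (hTsym : ∀ v w, ⟪T v, w⟫ = ⟪v, T w⟫)
    (hTrank : clmTrace T = k) :
    0 ≤ (k : ℝ) - clmTrace (S.comp T) ∧
      (k : ℝ) - clmTrace (S.comp T) = clmTrace ((1 - S).comp T) ∧
      (k : ℝ) - clmTrace (S.comp T) ≤ (k : ℝ) * ‖S - T‖ ^ 2 := by
  have hS2 : S * S = S := hSidem
  have hT2 : T * T = T := hTidem
  obtain ⟨P, hP⟩ : ∃ P, P = 1 - S := ⟨_, rfl⟩
  have hP2 : P * P = P := by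
    rw [hP, sub_mul, one_mul, mul_sub, mul_one, hS2]; simp
  have hPS : P * S = 0 := by rw [hP, sub_mul, one_mul, hS2, sub_self]
  have hPsym : ∀ v w, ⟪P v, w⟫ = ⟪v, P w⟫ := by
    intro v w
    simp only [hP, ContinuousLinearMap.sub_apply, ContinuousLinearMap.one_apply,
      inner_sub_left, inner_sub_right, hSsym]
  have hPapp : ∀ x, P (P x) = P x := fun x => by
    conv_rhs => rw [← hP2]
    rfl
  have hcomp : S.comp T = S * T := rfl
  have hcomp' : (1 - S).comp T = P * T := by rw [hP]; rfl
  have heq : (k : ℝ) - clmTrace (S.comp T) = clmTrace (P * T) := by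
    have h1 : P * T = T - S * T := by rw [hP, sub_mul, one_mul]
    rw [h1, clmTrace_sub, hTrank, hcomp]
  have hPTfold : P * (P * T) = P * T := by rw [← mul_assoc, hP2]
  have key : clmTrace (P * T)
      = ∑ i, ‖(P * T) (EuclideanSpace.single i 1)‖ ^ 2 := by
    have h1 : clmTrace (T * (P * (P * T))) = clmTrace (P * T) := by
      rw [clmTrace_mul_comm, hPTfold, mul_assoc, hT2]
    rw [← h1, clmTrace_eq_sum]
    refine Finset.sum_congr rfl fun i _ => ?_
    simp only [ContinuousLinearMap.mul_apply]
    rw [hTsym, hPsym]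
    exact real_inner_self_eq_norm_sq _
  have hnonneg : 0 ≤ clmTrace (P * T) := by
    rw [key]; exact Finset.sum_nonneg fun i _ => sq_nonneg _
  have hPnorm : ∀ x, ‖P x‖ ≤ ‖x‖ := by
    intro x
    have h1 : ‖P x‖ ^ 2 = ⟪x, P x⟫ := by
      rw [← real_inner_self_eq_norm_sq, hPsym, hPapp]
    have h2 := real_inner_le_norm x (P x)
    nlinarith [norm_nonneg (P x), norm_nonneg x]
  have hfact : P * ((T - S) * T) = P * T := by
    rw [sub_mul, mul_sub, ← mul_assoc, ← mul_assoc, hPS, zero_mul, sub_zero,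
      mul_assoc, hT2]
  have hTsum : ∑ i, ‖T (EuclideanSpace.single i 1)‖ ^ 2 = (k : ℝ) := by
    rw [← hTrank, clmTrace_eq_sum]
    refine Finset.sum_congr rfl fun i _ => ?_
    rw [← real_inner_self_eq_norm_sq, real_inner_comm, hTsym,
      ← ContinuousLinearMap.mul_apply, hT2, real_inner_comm]
  have hbound : clmTrace (P * T) ≤ (k : ℝ) * ‖S - T‖ ^ 2 := by
    rw [key]
    have hterm : ∀ i : Fin (n+1), ‖(P * T) (EuclideanSpace.single i 1)‖ ^ 2
        ≤ ‖S - T‖ ^ 2 * ‖T (EuclideanSpace.single i 1)‖ ^ 2 := by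
      intro i
      have h1 : ‖(P * T) (EuclideanSpace.single i 1)‖
          ≤ ‖S - T‖ * ‖T (EuclideanSpace.single i 1)‖ := by
        rw [← hfact]
        calc ‖(P * ((T - S) * T)) (EuclideanSpace.single i 1)‖
            = ‖P ((T - S) (T (EuclideanSpace.single i 1)))‖ := rfl
          _ ≤ ‖(T - S) (T (EuclideanSpace.single i 1))‖ := hPnorm _
          _ ≤ ‖T - S‖ * ‖T (EuclideanSpace.single i 1)‖ := (T - S).le_opNorm _
          _ = ‖S - T‖ * ‖T (EuclideanSpace.single i 1)‖ := by rw [norm_sub_rev]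
      calc ‖(P * T) (EuclideanSpace.single i 1)‖ ^ 2
          ≤ (‖S - T‖ * ‖T (EuclideanSpace.single i 1)‖) ^ 2 :=
            pow_le_pow_left₀ (norm_nonneg _) h1 2
        _ = ‖S - T‖ ^ 2 * ‖T (EuclideanSpace.single i 1)‖ ^ 2 := by ring
    calc ∑ i, ‖(P * T) (EuclideanSpace.single i 1)‖ ^ 2
        ≤ ∑ i, ‖S - T‖ ^ 2 * ‖T (EuclideanSpace.single i 1)‖ ^ 2 :=
          Finset.sum_le_sum fun i _ => hterm i
      _ = ‖S - T‖ ^ 2 * ∑ i, ‖T (EuclideanSpace.single i 1)‖ ^ 2 := by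
          rw [Finset.mul_sum]
      _ = (k : ℝ) * ‖S - T‖ ^ 2 := by rw [hTsum]; ring
  exact ⟨heq ▸ hnonneg, heq.trans (by rw [hcomp']), heq ▸ hbound⟩
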